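/- Let p ≥ q ≥ 2 be integers, μ_q > 0, L_p > 0, let f : E → ℝ be μ_q-uniformly star-convex of degree q with respect to a global minimizer x* and have L_p-Lipschitz-continuous p-th derivative, let M_p ≥ (p−1)·L_p, let x₀ ∈ E, and let D > 0 satisfy ‖x − x*‖ ≤ D whenever f(x) ≤ f(x₀). Let (x_t) be generated by basic p-th order tensor steps: for each t, x_{t+1} is a global minimizer of Ω_{x_t,M_p}. Then for all t ≥ 0, f(x_t) − f(x*) ≤ (1 − α^{low}_p)^t · (f(x₀) − f(x*)), where α^{low}_p = min{ 1/2, (1/2)·((p+1)!·μ_q/(q(M_p+L_p)D^{p−q+1}))^{1/p} }. -/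

import Mathlib

open scoped RealInnerProductSpace

section
variable {E : Type*} [NormedAddCommGroup E] [InnerProductSpace ℝ E]

/-- `f` is `μ`-uniformly star-convex of degree `q` with respect to `xs`. -/
def UniformlyStarConvex (f : E → ℝ) (xs : E) (q : ℕ) (μ : ℝ) : Prop :=
  ∀ x : E, ∀ α : ℝ, 0 ≤ α → α ≤ 1 →
    f (α • x + (1 - α) • xs) ≤
      α * f x + (1 - α) * f xs - α * (1 - α) * μ / q * ‖x - xs‖ ^ q

/-- `f` has `L`-Lipschitz-continuous `p`-th derivative. -/
def HasLipschitzDeriv (f : E → ℝ) (p : ℕ) (L : ℝ) : Prop :=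
  ContDiff ℝ p f ∧
    ∀ x y : E, ‖iteratedFDeriv ℝ p f x - iteratedFDeriv ℝ p f y‖ ≤ L * ‖x - y‖

/-- The `p`-th order Taylor polynomial `Φ_{x,p}(y)` of `f` at `x`. -/
noncomputable def taylorPoly (f : E → ℝ) (p : ℕ) (x y : E) : ℝ :=
  f x + ∑ k ∈ Finset.Icc 1 p,
    (1 / (Nat.factorial k : ℝ)) * iteratedFDeriv ℝ k f x (fun _ => y - x)

/-- The tensor model `Ω_{x,M}(y)`. -/
noncomputable def tensorModel (f : E → ℝ) (p : ℕ) (M : ℝ) (x y : E) : ℝ :=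
  taylorPoly f p x y + M / (Nat.factorial (p + 1) : ℝ) * ‖y - x‖ ^ (p + 1)

/-- `xp` is a basic `p`-th order tensor step from `x` with parameter `M`
(a global minimizer of the model). -/
def IsTensorStep (f : E → ℝ) (p : ℕ) (M : ℝ) (x xp : E) : Prop :=
  ∀ y : E, tensorModel f p M x xp ≤ tensorModel f p M x y

end

section Aux
variable {E : Type*} [NormedAddCommGroup E] [InnerProductSpace ℝ E]

lemma lineDeriv_aux (f : E → ℝ) (p : ℕ) (hf : ContDiff ℝ p f) (x v : E)
    (k : ℕ) (hk : k < p) (s : ℝ) :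
    HasDerivAt (fun s : ℝ => iteratedFDeriv ℝ k f (x + s • v) (fun _ => v))
      (iteratedFDeriv ℝ (k + 1) f (x + s • v) (fun _ => v)) s := by
  have hFk : ContDiff ℝ 1 (iteratedFDeriv ℝ k f) :=
    hf.iteratedFDeriv_right (by exact_mod_cast Nat.one_add_le_iff.mpr hk)
  have hline : HasDerivAt (fun s : ℝ => x + s • v) v s := by
    simpa using ((hasDerivAt_id s).smul_const v).const_add x
  have h1 : HasFDerivAt (iteratedFDeriv ℝ k f)
      (fderiv ℝ (iteratedFDeriv ℝ k f) (x + s • v)) (x + s • v) :=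
    (hFk.differentiable one_ne_zero (x + s • v)).hasFDerivAt
  exact (ContinuousMultilinearMap.apply ℝ (fun _ : Fin k => E) ℝ
      (fun _ => v)).hasFDerivAt.comp_hasDerivAt s (h1.comp_hasDerivAt s hline)

lemma telescope_aux (f : E → ℝ) (p : ℕ) (hf : ContDiff ℝ p f) (x v : E)
    (n : ℕ) (hn : n < p) (s : ℝ) :
    HasDerivAt (fun s : ℝ => ∑ k ∈ Finset.range (n + 1),
        (1 - s) ^ k / (Nat.factorial k : ℝ) *
          iteratedFDeriv ℝ k f (x + s • v) (fun _ => v))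
      ((1 - s) ^ n / (Nat.factorial n : ℝ) *
        iteratedFDeriv ℝ (n + 1) f (x + s • v) (fun _ => v)) s := by
  induction n with
  | zero => simpa using lineDeriv_aux f p hf x v 0 (by omega) s
  | succ n ih =>
      have IH := ih (by omega)
      have hterm : HasDerivAt (fun s : ℝ => (1 - s) ^ (n + 1) / (Nat.factorial (n+1) : ℝ) *
          iteratedFDeriv ℝ (n + 1) f (x + s • v) (fun _ => v))
          (-( (1 - s) ^ n / (Nat.factorial n : ℝ)) *
              iteratedFDeriv ℝ (n + 1) f (x + s • v) (fun _ => v)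
            + (1 - s) ^ (n + 1) / (Nat.factorial (n+1) : ℝ) *
              iteratedFDeriv ℝ (n + 2) f (x + s • v) (fun _ => v)) s := by
        have h1 : HasDerivAt (fun s : ℝ => (1 - s) ^ (n + 1) / (Nat.factorial (n+1) : ℝ))
            (-((1 - s) ^ n / (Nat.factorial n : ℝ))) s := by
          have hb : HasDerivAt (fun s : ℝ => (1 - s)) (-1) s := by
            simpa using (hasDerivAt_id s).const_sub 1
          have := (hb.pow (n+1)).div_const (Nat.factorial (n+1) : ℝ)
          refine this.congr_deriv ?_
          have : (Nat.factorial (n+1) : ℝ) = (n+1) * Nat.factorial n := by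
            push_cast [Nat.factorial_succ]; ring
          rw [Nat.add_sub_cancel, this]
          push_cast
          field_simp
        exact (h1.mul (lineDeriv_aux f p hf x v (n+1) (by omega) s))
      have := IH.add hterm
      have hsum : (fun s : ℝ => ∑ k ∈ Finset.range (n + 2),
          (1 - s) ^ k / (Nat.factorial k : ℝ) *
            iteratedFDeriv ℝ k f (x + s • v) (fun _ => v)) =
          (fun s : ℝ => (∑ k ∈ Finset.range (n + 1),
            (1 - s) ^ k / (Nat.factorial k : ℝ) *
              iteratedFDeriv ℝ k f (x + s • v) (fun _ => v))
            + (1 - s) ^ (n + 1) / (Nat.factorial (n+1) : ℝ) *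
              iteratedFDeriv ℝ (n + 1) f (x + s • v) (fun _ => v)) := by
        funext s; rw [Finset.sum_range_succ]
      rw [hsum]
      refine this.congr_deriv ?_
      ring

lemma integral_pow_mul (m : ℕ) :
    ∫ s in (0:ℝ)..1, (1 - s) ^ m * s = 1 / ((m + 1) * (m + 2)) := by
  have h : ∀ s : ℝ, (1 - s) ^ m * s = (1 - s) ^ m - (1 - s) ^ (m + 1) := by
    intro s; rw [pow_succ]; ring
  rw [intervalIntegral.integral_congr (fun s _ => h s)]
  rw [intervalIntegral.integral_sub (Continuous.intervalIntegrable (by continuity) _ _)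
    (Continuous.intervalIntegrable (by continuity) _ _)]
  have e1 : ∫ s in (0:ℝ)..1, (1 - s) ^ m = 1 / (m + 1) := by
    have := intervalIntegral.integral_comp_sub_left (a := (0:ℝ)) (b := 1)
      (fun u => u ^ m) 1
    simp only [sub_self, sub_zero] at this
    rw [this, integral_pow]; push_cast; ring
  have e2 : ∫ s in (0:ℝ)..1, (1 - s) ^ (m+1) = 1 / (m + 2) := by
    have := intervalIntegral.integral_comp_sub_left (a := (0:ℝ)) (b := 1)
      (fun u => u ^ (m+1)) 1
    simp only [sub_self, sub_zero] at this
    rw [this, integral_pow]; push_cast; ring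
  rw [e1, e2]; field_simp; ring

lemma integral_pow_one (m : ℕ) :
    ∫ s in (0:ℝ)..1, (1 - s) ^ m = 1 / (m + 1) := by
  have := intervalIntegral.integral_comp_sub_left (a := (0:ℝ)) (b := 1)
    (fun u => u ^ m) 1
  simp only [sub_self, sub_zero] at this
  rw [this, integral_pow]; push_cast; ring

lemma taylor_bound (f : E → ℝ) (m : ℕ) (L : ℝ) (hL : 0 ≤ L)
    (hf : ContDiff ℝ (m + 1 : ℕ) f)
    (hlip : ∀ a b : E, ‖iteratedFDeriv ℝ (m+1) f a - iteratedFDeriv ℝ (m+1) f b‖ ≤ L * ‖a - b‖)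
    (x y : E) :
    |f y - taylorPoly f (m+1) x y| ≤
      L / (Nat.factorial (m+2) : ℝ) * ‖y - x‖ ^ (m + 2) := by
  set v := y - x with hv
  set G : ℕ → ℝ → ℝ := fun k s => iteratedFDeriv ℝ k f (x + s • v) (fun _ => v) with hG
  set F : ℝ → ℝ := fun s => ∑ k ∈ Finset.range (m+1),
    (1 - s) ^ k / (Nat.factorial k : ℝ) * G k s with hF
  have hFd : ∀ s : ℝ, HasDerivAt F
      ((1 - s) ^ m / (Nat.factorial m : ℝ) * G (m+1) s) s :=
    fun s => telescope_aux f (m+1) hf x v m (lt_add_one m) s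
  have hGcont : Continuous (G (m+1)) := by
    have h1 : Continuous (iteratedFDeriv ℝ (m+1) f) :=
      hf.continuous_iteratedFDeriv (le_refl _)
    exact (ContinuousMultilinearMap.apply ℝ (fun _ : Fin (m+1) => E) ℝ
      (fun _ => v)).continuous.comp (h1.comp (by continuity))
  have hderC : Continuous (fun s : ℝ => (1 - s) ^ m / (Nat.factorial m : ℝ) * G (m+1) s) :=
    (Continuous.div_const (by continuity) _).mul hGcont
  have hFTC : ∫ s in (0:ℝ)..1, (1 - s) ^ m / (Nat.factorial m : ℝ) * G (m+1) s
      = F 1 - F 0 :=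
    intervalIntegral.integral_eq_sub_of_hasDerivAt (fun s _ => hFd s)
      (hderC.intervalIntegrable 0 1)
  have hF1 : F 1 = f y := by
    have : F 1 = ∑ k ∈ Finset.range (m+1),
        (1 - (1:ℝ)) ^ k / (Nat.factorial k : ℝ) * G k 1 := rfl
    rw [this, Finset.sum_eq_single 0]
    · simp [hG, hv]
    · intro b _ hb
      simp [zero_pow hb]
    · intro h; exact absurd (Finset.mem_range.mpr (by omega)) h
  have hF0 : F 0 = ∑ k ∈ Finset.range (m+1), 1 / (Nat.factorial k : ℝ) * G k 0 := by
    have : F 0 = ∑ k ∈ Finset.range (m+1),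
        (1 - (0:ℝ)) ^ k / (Nat.factorial k : ℝ) * G k 0 := rfl
    rw [this]
    apply Finset.sum_congr rfl
    intro k _
    norm_num
  have hGk : ∀ k, G k 0 = iteratedFDeriv ℝ k f x (fun _ => v) := by
    intro k; rw [hG]; simp
  have hT : taylorPoly f (m+1) x y =
      F 0 + 1 / (Nat.factorial (m+1) : ℝ) * G (m+1) 0 := by
    rw [hF0]
    simp only [hGk]
    rw [← Finset.sum_range_succ (fun k => 1 / (Nat.factorial k : ℝ) *
      iteratedFDeriv ℝ k f x (fun _ => v)) (m+1)]
    rw [taylorPoly, ← hv]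
    have h0 : 1 / (Nat.factorial 0 : ℝ) * iteratedFDeriv ℝ 0 f x (fun _ => v) = f x := by
      simp
    rw [Finset.range_eq_Ico, Finset.sum_eq_sum_Ico_succ_bot (by omega : 0 < m+2), h0,
      ← Finset.Ico_add_one_right_eq_Icc]
    rfl
  have hint1 : IntervalIntegrable
      (fun s : ℝ => (1 - s) ^ m / (Nat.factorial m : ℝ) * G (m+1) s) MeasureTheory.volume 0 1 :=
    hderC.intervalIntegrable 0 1
  have hint2 : IntervalIntegrable
      (fun s : ℝ => (1 - s) ^ m / (Nat.factorial m : ℝ) * G (m+1) 0) MeasureTheory.volume 0 1 :=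
    Continuous.intervalIntegrable
      ((((continuous_const.sub continuous_id).pow m).div_const _).mul continuous_const) 0 1
  have hconst : ∫ s in (0:ℝ)..1, (1 - s) ^ m / (Nat.factorial m : ℝ) * G (m+1) 0
      = 1 / (Nat.factorial (m+1) : ℝ) * G (m+1) 0 := by
    rw [intervalIntegral.integral_mul_const, intervalIntegral.integral_div,
      integral_pow_one]
    have : (Nat.factorial (m+1) : ℝ) = (m+1) * Nat.factorial m := by
      push_cast [Nat.factorial_succ]; ring
    rw [this]
    have h1 : (Nat.factorial m : ℝ) ≠ 0 := by positivity
    have h2 : (m : ℝ) + 1 ≠ 0 := by positivity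
    field_simp
  have key : f y - taylorPoly f (m+1) x y =
      ∫ s in (0:ℝ)..1, (1 - s) ^ m / (Nat.factorial m : ℝ) * (G (m+1) s - G (m+1) 0) := by
    have hsplit : (∫ s in (0:ℝ)..1,
        (1 - s) ^ m / (Nat.factorial m : ℝ) * (G (m+1) s - G (m+1) 0))
        = (∫ s in (0:ℝ)..1, (1 - s) ^ m / (Nat.factorial m : ℝ) * G (m+1) s)
          - ∫ s in (0:ℝ)..1, (1 - s) ^ m / (Nat.factorial m : ℝ) * G (m+1) 0 := by
      rw [← intervalIntegral.integral_sub hint1 hint2]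
      apply intervalIntegral.integral_congr
      intro s _
      ring
    rw [hsplit, hFTC, hconst, hT, hF1]
    ring
  set C := L * ‖v‖ ^ (m + 2) / (Nat.factorial m : ℝ) with hC
  have hfm : (0:ℝ) < (Nat.factorial m : ℝ) := by positivity
  have hCnn : 0 ≤ C := by positivity
  have hgint : IntervalIntegrable (fun s : ℝ => (1 - s) ^ m * s * C)
      MeasureTheory.volume 0 1 :=
    Continuous.intervalIntegrable
      ((((continuous_const.sub continuous_id).pow m).mul continuous_id).mul continuous_const) 0 1
  have hbound : ∀ᵐ t ∂(MeasureTheory.volume.restrict (Set.uIoc (0:ℝ) 1)),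
      ‖(1 - t) ^ m / (Nat.factorial m : ℝ) * (G (m+1) t - G (m+1) 0)‖ ≤
        (1 - t) ^ m * t * C := by
    refine (MeasureTheory.ae_restrict_mem measurableSet_uIoc).mono (fun t ht => ?_)
    rw [Set.uIoc_of_le zero_le_one] at ht
    obtain ⟨ht0, ht1⟩ := ht
    have hsub : G (m+1) t - G (m+1) 0 =
        (iteratedFDeriv ℝ (m+1) f (x + t • v) -
          iteratedFDeriv ℝ (m+1) f (x + (0:ℝ) • v)) (fun _ => v) := by
      rw [ContinuousMultilinearMap.sub_apply]
    have hop := (iteratedFDeriv ℝ (m+1) f (x + t • v) -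
        iteratedFDeriv ℝ (m+1) f (x + (0:ℝ) • v)).le_opNorm (fun _ => v)
    have hprod : (∏ _i : Fin (m+1), ‖v‖) = ‖v‖ ^ (m+1) := by
      simp [Finset.prod_const]
    rw [hprod] at hop
    have hlipt : ‖iteratedFDeriv ℝ (m+1) f (x + t • v) -
        iteratedFDeriv ℝ (m+1) f (x + (0:ℝ) • v)‖ ≤ L * (t * ‖v‖) := by
      have := hlip (x + t • v) (x + (0:ℝ) • v)
      have he : ‖(x + t • v) - (x + (0:ℝ) • v)‖ = t * ‖v‖ := by
        rw [show (x + t • v) - (x + (0:ℝ) • v) = t • v by module]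
        rw [norm_smul, Real.norm_eq_abs, abs_of_pos ht0]
      rw [he] at this
      exact this
    have hGd : |G (m+1) t - G (m+1) 0| ≤ L * (t * ‖v‖) * ‖v‖ ^ (m+1) := by
      rw [hsub]
      calc |(iteratedFDeriv ℝ (m+1) f (x + t • v) -
          iteratedFDeriv ℝ (m+1) f (x + (0:ℝ) • v)) (fun _ => v)|
          ≤ ‖iteratedFDeriv ℝ (m+1) f (x + t • v) -
            iteratedFDeriv ℝ (m+1) f (x + (0:ℝ) • v)‖ * ‖v‖ ^ (m+1) := hop
        _ ≤ L * (t * ‖v‖) * ‖v‖ ^ (m+1) :=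
            mul_le_mul_of_nonneg_right hlipt (by positivity)
    rw [Real.norm_eq_abs, abs_mul, abs_div, abs_of_nonneg (pow_nonneg (by linarith) m), abs_of_pos hfm]
    calc (1 - t) ^ m / (Nat.factorial m : ℝ) * |G (m+1) t - G (m+1) 0|
        ≤ (1 - t) ^ m / (Nat.factorial m : ℝ) * (L * (t * ‖v‖) * ‖v‖ ^ (m+1)) :=
          mul_le_mul_of_nonneg_left hGd
            (div_nonneg (pow_nonneg (by linarith) m) hfm.le)
      _ = (1 - t) ^ m * t * C := by rw [hC]; field_simp; ring
  have hnorm := intervalIntegral.norm_integral_le_abs_of_norm_le hbound hgint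
  have hgval : ∫ s in (0:ℝ)..1, (1 - s) ^ m * s * C = C / ((m+1)*(m+2)) := by
    rw [intervalIntegral.integral_mul_const, integral_pow_mul]
    ring
  rw [key]
  rw [Real.norm_eq_abs] at hnorm
  refine le_trans hnorm ?_
  rw [hgval, abs_of_nonneg (by positivity)]
  have hfact : (Nat.factorial (m+2) : ℝ) = (m+2) * ((m+1) * (Nat.factorial m : ℝ)) := by
    push_cast [Nat.factorial_succ]
    ring
  have hne1 : ((m:ℝ)+1) ≠ 0 := by positivity
  have hne2 : ((m:ℝ)+2) ≠ 0 := by positivity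
  have heq : C / (((m:ℝ)+1)*((m:ℝ)+2)) =
      L / (Nat.factorial (m+2) : ℝ) * ‖v‖ ^ (m+2) := by
    rw [hC, hfact]
    field_simp
    try exact Or.inl trivial
  exact le_of_eq heq

lemma taylor_bound' (f : E → ℝ) (p : ℕ) (L : ℝ) (hL : 0 ≤ L) (hp : 1 ≤ p)
    (hf : ContDiff ℝ p f)
    (hlip : ∀ a b : E, ‖iteratedFDeriv ℝ p f a - iteratedFDeriv ℝ p f b‖ ≤ L * ‖a - b‖)
    (x y : E) :
    |f y - taylorPoly f p x y| ≤
      L / (Nat.factorial (p + 1) : ℝ) * ‖y - x‖ ^ (p + 1) := by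
  obtain ⟨m, rfl⟩ : ∃ m, p = m + 1 := ⟨p - 1, by omega⟩
  exact taylor_bound f m L hL hf hlip x y

end Aux

theorem tensor_linear_rate {E : Type*} [NormedAddCommGroup E]
    [InnerProductSpace ℝ E] [FiniteDimensional ℝ E]
    (f : E → ℝ) (xs : E) (p q : ℕ) (μ L M D : ℝ)
    (hq : 2 ≤ q) (hpq : q ≤ p) (hμ : 0 < μ) (hL : 0 < L)
    (hM : ((p : ℝ) - 1) * L ≤ M) (hD : 0 < D)
    (hmin : ∀ y : E, f xs ≤ f y)
    (hsc : UniformlyStarConvex f xs q μ)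
    (hf : HasLipschitzDeriv f p L)
    (x : ℕ → E)
    (hlev : ∀ z : E, f z ≤ f (x 0) → ‖z - xs‖ ≤ D)
    (hstep : ∀ t : ℕ, IsTensorStep f p M (x t) (x (t + 1))) :
    ∀ t : ℕ, f (x t) - f xs ≤
      (1 - min (1 / 2) ((1 / 2) * (((Nat.factorial (p + 1) : ℝ) * μ) /
        ((q : ℝ) * (M + L) * D ^ (p - q + 1))) ^ ((1 : ℝ) / p))) ^ t *
        (f (x 0) - f xs) := by
  have hq0 : (0:ℝ) < (q:ℝ) := by exact_mod_cast (by omega : 0 < q)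
  have hp1 : (1:ℝ) ≤ (p:ℝ) - 1 := by
    have : (2:ℝ) ≤ (p:ℝ) := by exact_mod_cast (by omega : 2 ≤ p)
    linarith
  have hLM : L ≤ M := le_trans (by nlinarith) hM
  have hML : (0:ℝ) < M + L := by linarith
  have hfac : (0:ℝ) < (Nat.factorial (p + 1) : ℝ) := by positivity
  have hDn : (0:ℝ) < D ^ (p - q + 1) := by positivity
  set A : ℝ := ((Nat.factorial (p + 1) : ℝ) * μ) /
    ((q : ℝ) * (M + L) * D ^ (p - q + 1)) with hA
  have hA0 : 0 < A := div_pos (by positivity) (by positivity)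
  set α : ℝ := min (1 / 2) ((1 / 2) * A ^ ((1 : ℝ) / p)) with hα
  have hα0 : 0 < α := by
    apply lt_min (by norm_num)
    have := Real.rpow_pos_of_pos hA0 ((1:ℝ)/p)
    linarith
  have hα12 : α ≤ 1 / 2 := min_le_left _ _
  have hαp : α ^ p ≤ (1 / 2) * A := by
    have h1 : α ≤ (1/2) * A ^ ((1:ℝ)/p) := min_le_right _ _
    have h2 : α ^ p ≤ ((1/2) * A ^ ((1:ℝ)/p)) ^ p := pow_le_pow_left₀ hα0.le h1 p
    have h3 : ((1/2) * A ^ ((1:ℝ)/p)) ^ p = (1/2 : ℝ) ^ p * A := by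
      rw [mul_pow]
      congr 1
      rw [← Real.rpow_natCast (A ^ ((1:ℝ)/p)) p, ← Real.rpow_mul hA0.le]
      have hpne : ((p:ℝ)) ≠ 0 := Nat.cast_ne_zero.mpr (by omega)
      rw [show (1:ℝ)/p * p = 1 by field_simp, Real.rpow_one]
    have h4 : (1/2 : ℝ) ^ p ≤ 1/2 := by
      have := pow_le_pow_of_le_one (by norm_num : (0:ℝ) ≤ 1/2)
        (by norm_num : (1/2:ℝ) ≤ 1) (show 1 ≤ p by omega)
      simpa using this
    calc α ^ p ≤ (1/2:ℝ) ^ p * A := by rw [← h3]; exact h2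
      _ ≤ (1/2) * A := mul_le_mul_of_nonneg_right h4 hA0.le
  have htay : ∀ a b : E, |f b - taylorPoly f p a b| ≤
      L / (Nat.factorial (p + 1) : ℝ) * ‖b - a‖ ^ (p + 1) :=
    fun a b => taylor_bound' f p L hL.le (by omega) hf.1 hf.2 a b
  -- one-step bound
  have hstep' : ∀ t : ℕ, ∀ y : E, f (x (t + 1)) ≤
      f y + (M + L) / (Nat.factorial (p + 1) : ℝ) * ‖y - x t‖ ^ (p + 1) := by
    intro t y
    have ht1 := (abs_le.mp (htay (x t) (x (t+1)))).2
    have ht2 := (abs_le.mp (htay (x t) y)).1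
    have hmono : L / (Nat.factorial (p + 1) : ℝ) * ‖x (t+1) - x t‖ ^ (p + 1) ≤
        M / (Nat.factorial (p + 1) : ℝ) * ‖x (t+1) - x t‖ ^ (p + 1) := by gcongr
    have h1 : f (x (t+1)) ≤ tensorModel f p M (x t) (x (t+1)) := by
      unfold tensorModel
      linarith
    have h2 : tensorModel f p M (x t) (x (t+1)) ≤ tensorModel f p M (x t) y := hstep t y
    have h3 : tensorModel f p M (x t) y ≤
        f y + (M + L) / (Nat.factorial (p + 1) : ℝ) * ‖y - x t‖ ^ (p + 1) := by
      unfold tensorModel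
      have he : (M + L) / (Nat.factorial (p + 1) : ℝ) * ‖y - x t‖ ^ (p + 1) =
          M / (Nat.factorial (p + 1) : ℝ) * ‖y - x t‖ ^ (p + 1) +
          L / (Nat.factorial (p + 1) : ℝ) * ‖y - x t‖ ^ (p + 1) := by ring
      rw [he]
      linarith
    linarith
  -- per-step decrease
  have hdec : ∀ t, f (x t) ≤ f (x 0) →
      f (x (t+1)) - f xs ≤ (1 - α) * (f (x t) - f xs) := by
    intro t hb
    set r := ‖x t - xs‖ with hrdef
    have hr0 : 0 ≤ r := norm_nonneg _
    have hrD : r ≤ D := hlev _ hb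
    have hscv := hsc (x t) (1 - α) (by linarith) (by linarith)
    rw [show (1:ℝ) - (1 - α) = α by ring] at hscv
    have hsx := hstep' t ((1 - α) • x t + α • xs)
    have hnorm : ‖((1 - α) • x t + α • xs) - x t‖ = α * r := by
      rw [show ((1 - α) • x t + α • xs) - x t = α • (xs - x t) by module]
      rw [norm_smul, Real.norm_eq_abs, abs_of_pos hα0, hrdef, norm_sub_rev]
    rw [hnorm] at hsx
    have hkey : (M + L) / (Nat.factorial (p + 1) : ℝ) * (α * r) ^ (p + 1) ≤
        (1 - α) * α * μ / q * r ^ q := by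
      have hsplit : (M + L) / (Nat.factorial (p + 1) : ℝ) * (α * r) ^ (p + 1) =
          ((M + L) / (Nat.factorial (p + 1) : ℝ) * α ^ p * r ^ (p - q + 1)) *
            (α * r ^ q) := by
        have e1 : r ^ (p + 1) = r ^ (p - q + 1) * r ^ q := by
          rw [← pow_add]; congr 1; omega
        have e2 : α ^ (p + 1) = α ^ p * α := pow_succ α p
        rw [mul_pow, e1, e2]; ring
      have hcore : (M + L) / (Nat.factorial (p + 1) : ℝ) * α ^ p * r ^ (p - q + 1) ≤
          (1 - α) * μ / q := by
        have c1 : (M + L) / (Nat.factorial (p + 1) : ℝ) * α ^ p * r ^ (p - q + 1) ≤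
            (M + L) / (Nat.factorial (p + 1) : ℝ) * ((1/2) * A) * D ^ (p - q + 1) := by
          calc (M + L) / (Nat.factorial (p + 1) : ℝ) * α ^ p * r ^ (p - q + 1)
              ≤ (M + L) / (Nat.factorial (p + 1) : ℝ) * α ^ p * D ^ (p - q + 1) := by
                gcongr
            _ ≤ (M + L) / (Nat.factorial (p + 1) : ℝ) * ((1/2) * A) * D ^ (p - q + 1) := by
                gcongr
        have c2 : (M + L) / (Nat.factorial (p + 1) : ℝ) * ((1/2) * A) * D ^ (p - q + 1)
            = μ / (2 * q) := by
          rw [hA]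
          field_simp
        have c3 : μ / (2 * q) ≤ (1 - α) * μ / q := by
          have h12 : (1:ℝ)/2 ≤ 1 - α := by linarith
          calc μ / (2*q) = (1/2) * (μ/q) := by ring
            _ ≤ (1-α) * (μ/q) := mul_le_mul_of_nonneg_right h12 (by positivity)
            _ = (1-α) * μ / q := by ring
        calc (M + L) / (Nat.factorial (p + 1) : ℝ) * α ^ p * r ^ (p - q + 1)
            ≤ (M + L) / (Nat.factorial (p + 1) : ℝ) * ((1/2) * A) * D ^ (p - q + 1) := c1
          _ = μ / (2 * q) := c2
          _ ≤ (1 - α) * μ / q := c3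
      calc (M + L) / (Nat.factorial (p + 1) : ℝ) * (α * r) ^ (p + 1)
          = ((M + L) / (Nat.factorial (p + 1) : ℝ) * α ^ p * r ^ (p - q + 1)) *
            (α * r ^ q) := hsplit
        _ ≤ ((1 - α) * μ / q) * (α * r ^ q) :=
            mul_le_mul_of_nonneg_right hcore (by positivity)
        _ = (1 - α) * α * μ / q * r ^ q := by ring
    have hexp : (1 - α) * (f (x t) - f xs) = (1-α) * f (x t) + α * f xs - f xs := by
      ring
    rw [hexp]
    linarith
  -- induction
  have hmain : ∀ t, f (x t) ≤ f (x 0) ∧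
      f (x t) - f xs ≤ (1 - α) ^ t * (f (x 0) - f xs) := by
    intro t
    induction t with
    | zero => exact ⟨le_refl _, by simp⟩
    | succ t ih =>
        obtain ⟨hb, hr⟩ := ih
        have hd := hdec t hb
        have h1α : 0 ≤ 1 - α := by linarith
        have hnn : 0 ≤ f (x t) - f xs := by linarith [hmin (x t)]
        have hcontr : f (x (t+1)) - f xs ≤ f (x t) - f xs :=
          le_trans hd (by nlinarith [mul_nonneg hα0.le hnn])
        refine ⟨by linarith, ?_⟩
        calc f (x (t+1)) - f xs ≤ (1-α) * (f (x t) - f xs) := hd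
          _ ≤ (1-α) * ((1-α)^t * (f (x 0) - f xs)) := mul_le_mul_of_nonneg_left hr h1α
          _ = (1-α)^(t+1) * (f (x 0) - f xs) := by ring
  intro t
  exact (hmain t).2
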